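/- Closure of σ-ideals under well-ordered unions: let Z be a Polish space, I a σ-ideal on Z σ-generated by closed sets, and A a well-orderable collection of sets in I all belonging to 𝔇(x) and with A ⊆ 𝔇(x). If there are only countably many closed subsets of Z in D(x), and every member of 𝔇(x) ∩ I is covered by the union of the closed sets in D(x) ∩ I, then ⋃A ∈ I. -/
import Mathlib

/-- closure of σ-ideals σ-generated by closed sets under
well-ordered unions. Let `Z` be Polish, `I` a σ-ideal on `Z` σ-generated by
closed sets, `Dx` the family of subsets of `Z` in the definable closure `D(x)`,
and `A` a (well-orderable) collection of sets in `I` all belonging to the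
`x`-definable sets, with `A ⊆ Dx`. If there are only countably many closed
subsets of `Z` in `D(x)` and every member of `𝔇(x) ∩ I` is covered by the union
of the closed sets in `D(x) ∩ I`, then `⋃ A ∈ I`. -/
theorem sigmaIdeal_wellOrdered_union {Z : Type*} [TopologicalSpace Z]
    [PolishSpace Z]
    (I : Set (Set Z))
    -- I is a σ-ideal:
    (hIempty : ∅ ∈ I)
    (hIdown : ∀ s t : Set Z, s ⊆ t → t ∈ I → s ∈ I)
    (hIσ : ∀ f : ℕ → Set Z, (∀ n, f n ∈ I) → (⋃ n, f n) ∈ I)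
    -- I is σ-generated by closed sets:
    (hIgen : ∀ s ∈ I, ∃ f : ℕ → Set Z,
      (∀ n, IsClosed (f n) ∧ f n ∈ I) ∧ s ⊆ ⋃ n, f n)
    -- the subsets of Z lying in the definable closure D(x)
    (Dx : Set (Set Z))
    -- inaccessibility: only countably many closed subsets of Z in D(x)
    (hctble : {C ∈ Dx | IsClosed C}.Countable)
    -- consequence of the independence axioms: every x-definable member of I is
    -- covered by the union of the closed sets in D(x) ∩ I
    (hcover : ∀ s ∈ Dx, s ∈ I → s ⊆ ⋃₀ {C | C ∈ Dx ∧ IsClosed C ∧ C ∈ I})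
    (A : Set (Set Z))
    (hAI : ∀ s ∈ A, s ∈ I)
    (hADx : A ⊆ Dx) :
    ⋃₀ A ∈ I := by
  set S : Set (Set Z) := {C | C ∈ Dx ∧ IsClosed C ∧ C ∈ I} with hS
  have hScount : S.Countable := Set.Countable.mono (fun C hC => Set.mem_sep hC.1 hC.2.1) hctble
  have hSI : ⋃₀ S ∈ I := by
    rcases S.eq_empty_or_nonempty with h | hne
    · rw [h]; simpa using hIempty
    · obtain ⟨f, hf⟩ := hScount.exists_eq_range hne
      have : ⋃₀ S = ⋃ n, f n := by rw [hf, Set.sUnion_range]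
      rw [this]
      exact hIσ f fun n => by
        have : f n ∈ S := by rw [hf]; exact Set.mem_range_self n
        exact this.2.2
  refine hIdown _ _ ?_ hSI
  intro z hz
  obtain ⟨s, hsA, hzs⟩ := hz
  exact hcover s (hADx hsA) (hAI s hsA) hzs
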